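/- Let (V, d) be a finite metric space, let Z' ⊆ V with |Z'| ≤ z be the outliers of the optimal (k, z)-clustering with centers c_1, …, c_k, and let A ⊆ V be any set of points containing, for each v ∈ V, some designated nearest point a_v ∈ A (a_v = argmin_{a∈A} d(v,a)). For each optimal center c_j, let c_j' be the nearest point of A to c_j. Then for the ℓ_p objective (p ≥ 1): ∑_{v ∈ V∖Z'} d(a_v, c'_v)^p ≤ 2^{2p−1} · ( ∑_{v ∈ V∖Z'} d(v, a_v)^p + ∑_{v ∈ V∖Z'} d(v, c_v)^p ), where c_v is the optimal center of v and c'_v its nearest A-point. -/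

import Mathlib

open Finset

lemma real_rpow_add_le (x y : ℝ) (hx : 0 ≤ x) (hy : 0 ≤ y) {p : ℝ} (hp : 1 ≤ p) :
    (x + y) ^ p ≤ 2 ^ (p - 1) * (x ^ p + y ^ p) := by
  have h := NNReal.rpow_add_le_mul_rpow_add_rpow ⟨x, hx⟩ ⟨y, hy⟩ hp
  have := NNReal.coe_le_coe.2 h
  push_cast at this
  convert this using 2 <;>
    rfl

/-- Core chain-of-triangle-inequalities step of the distributed clustering analysis. -/
theorem triangle_chain_bound {V : Type*} [MetricSpace V] [Fintype V] [DecidableEq V] {k z : ℕ}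
    (Z' : Finset V) (hZ : Z'.card ≤ z)
    (A : Finset V) (a : V → V) (haA : ∀ v, a v ∈ A)
    (hanear : ∀ v, ∀ b ∈ A, dist v (a v) ≤ dist v b)
    (c : Fin k → V) (σ : V → Fin k)
    (hσ : ∀ v j, dist v (c (σ v)) ≤ dist v (c j))
    (c' : Fin k → V) (hc' : ∀ j, c' j ∈ A)
    (hc'near : ∀ j, ∀ b ∈ A, dist (c j) (c' j) ≤ dist (c j) b)
    (p : ℝ) (hp : 1 ≤ p) :
    ∑ v ∈ Finset.univ \ Z', dist (a v) (c' (σ v)) ^ p ≤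
      (2 : ℝ) ^ (2 * p - 1) *
        (∑ v ∈ Finset.univ \ Z', dist v (a v) ^ p +
          ∑ v ∈ Finset.univ \ Z', dist v (c (σ v)) ^ p) := by
  have hp0 : (0:ℝ) ≤ p := le_trans zero_le_one hp
  have key : ∀ v : V, dist (a v) (c' (σ v)) ^ p ≤
      (2 : ℝ) ^ (2 * p - 1) * (dist v (a v) ^ p + dist v (c (σ v)) ^ p) := by
    intro v
    set x := dist v (a v)
    set y := dist v (c (σ v))
    have h1 : dist (a v) (c' (σ v)) ≤ 2 * (x + y) := by
      have t1 : dist (a v) (c' (σ v)) ≤ dist (a v) (c (σ v)) + dist (c (σ v)) (c' (σ v)) :=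
        dist_triangle _ _ _
      have t2 : dist (c (σ v)) (c' (σ v)) ≤ dist (c (σ v)) (a v) := hc'near _ _ (haA v)
      have t3 : dist (a v) (c (σ v)) ≤ x + y := by
        calc dist (a v) (c (σ v)) ≤ dist (a v) v + dist v (c (σ v)) := dist_triangle _ _ _
        _ = x + y := by rw [dist_comm]
      calc dist (a v) (c' (σ v)) ≤ dist (a v) (c (σ v)) + dist (c (σ v)) (a v) := by
            linarith [t1, t2]
        _ = 2 * dist (a v) (c (σ v)) := by rw [dist_comm (c (σ v))]; ring
        _ ≤ 2 * (x + y) := by linarith [t3]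
    have h2 : dist (a v) (c' (σ v)) ^ p ≤ (2 * (x + y)) ^ p :=
      Real.rpow_le_rpow dist_nonneg h1 hp0
    have h3 : (2 * (x + y)) ^ p = 2 ^ p * (x + y) ^ p := by
      rw [Real.mul_rpow (by norm_num) (by positivity)]
    have h4 : (x + y) ^ p ≤ 2 ^ (p - 1) * (x ^ p + y ^ p) :=
      real_rpow_add_le x y dist_nonneg dist_nonneg hp
    have h5 : (2:ℝ) ^ p * (2 ^ (p - 1) * (x ^ p + y ^ p)) =
        2 ^ (2 * p - 1) * (x ^ p + y ^ p) := by
      rw [← mul_assoc, ← Real.rpow_add (by norm_num)]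
      ring_nf
    calc dist (a v) (c' (σ v)) ^ p ≤ 2 ^ p * (x + y) ^ p := by rw [← h3]; exact h2
      _ ≤ 2 ^ p * (2 ^ (p - 1) * (x ^ p + y ^ p)) := by
          have : (0:ℝ) ≤ (2:ℝ) ^ p := Real.rpow_nonneg (by norm_num) p
          exact mul_le_mul_of_nonneg_left h4 this
      _ = 2 ^ (2 * p - 1) * (x ^ p + y ^ p) := h5
  calc ∑ v ∈ Finset.univ \ Z', dist (a v) (c' (σ v)) ^ p
      ≤ ∑ v ∈ Finset.univ \ Z',
          (2 : ℝ) ^ (2 * p - 1) * (dist v (a v) ^ p + dist v (c (σ v)) ^ p) :=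
        Finset.sum_le_sum fun v _ => key v
    _ = (2 : ℝ) ^ (2 * p - 1) *
        (∑ v ∈ Finset.univ \ Z', dist v (a v) ^ p +
          ∑ v ∈ Finset.univ \ Z', dist v (c (σ v)) ^ p) := by
        rw [← Finset.mul_sum, Finset.sum_add_distrib]
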